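/- Let N be a finite index set, b ∈ ℕ with |N| ≥ b + 1, (λ̌_j)_{j∈N} vectors in a real inner product space, B ⊆ N with |B| ≤ b, and let C be the (b+1)-th largest element of the multiset of norms {‖λ̌_j‖ : j ∈ N} (sorted in nonincreasing order, with multiplicity). Let λ_i be a further vector (the agent's own dual variable), let U ⊆ N∪{i} with i ∈ U, and let (ẽ_j)_{j∈U} be nonnegative weights with w := Σ_{j∈U} ẽ_j > 0. Then the IOS(ARC) output satisfies ‖(1/w)·(ẽ_i·λ_i + Σ_{j∈U∖{i}} ẽ_j·clip_C(λ̌_j))‖ ≤ max over j' ∈ (N∖B)∪{i} of ‖λ̌_{j'}‖, where λ̌_i := λ_i. -/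

import Mathlib

/-- The clipping operator `clip_C(v) = min(1, C/‖v‖)·v` (with `clip_C(0) = 0`,
since in Lean `C/0 = 0`). -/
noncomputable def clip {E : Type*} [NormedAddCommGroup E] [InnerProductSpace ℝ E]
    (C : ℝ) (v : E) : E := min 1 (C / ‖v‖) • v

lemma norm_clip {E : Type*} [NormedAddCommGroup E] [InnerProductSpace ℝ E]
    {C : ℝ} (hC : 0 ≤ C) (v : E) : ‖clip C v‖ = min ‖v‖ C := by
  unfold clip
  rcases eq_or_ne v 0 with rfl | hv
  · simp [hC]
  · have h : 0 < ‖v‖ := norm_pos_iff.mpr hv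
    rw [norm_smul, Real.norm_eq_abs,
      abs_of_nonneg (le_min zero_le_one (div_nonneg hC h.le)),
      min_mul_of_nonneg _ _ h.le, one_mul, div_mul_cancel₀ _ h.ne']

/-- **The iterative outlier scissor rule IOS composed with adaptive robust
clipping ARC satisfies the norm condition (Property 2):** the output norm is
bounded by the maximal norm among the agent's own dual variable `lamc i` and
the benign neighbors' dual variables. -/
theorem ios_arc_norm_bound
    {E : Type*} [NormedAddCommGroup E] [InnerProductSpace ℝ E]
    {ι : Type*} [DecidableEq ι]
    (N : Finset ι) (b : ℕ) (hNb : b + 1 ≤ N.card)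
    (lamc : ι → E)
    (B : Finset ι) (hBN : B ⊆ N) (hB : B.card ≤ b)
    (C : ℝ)
    (hC : C = ((N.val.map fun j => ‖lamc j‖).sort (· ≤ ·)).getD
        (N.card - 1 - b) 0)
    (i : ι) (hi : i ∉ N)
    (U : Finset ι) (hU : U ⊆ insert i N) (hiU : i ∈ U)
    (e : ι → ℝ) (he : ∀ j ∈ U, 0 ≤ e j)
    (w : ℝ) (hw : w = ∑ j ∈ U, e j) (hwpos : 0 < w) :
    ‖w⁻¹ • (e i • lamc i + ∑ j ∈ U \ {i}, e j • clip C (lamc j))‖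
      ≤ sSup ((fun j' => ‖lamc j'‖) '' ((insert i (N \ B) : Finset ι) : Set ι)) := by
  set M := sSup ((fun j' => ‖lamc j'‖) '' ((insert i (N \ B) : Finset ι) : Set ι)) with hM
  have hbdd : BddAbove ((fun j' => ‖lamc j'‖) '' ((insert i (N \ B) : Finset ι) : Set ι)) :=
    ((insert i (N \ B)).finite_toSet.image _).bddAbove
  have hle : ∀ j ∈ insert i (N \ B), ‖lamc j‖ ≤ M := fun j hj =>
    le_csSup hbdd ⟨j, by simpa using hj, rfl⟩
  have hiM : ‖lamc i‖ ≤ M := hle i (Finset.mem_insert_self _ _)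
  have hM0 : 0 ≤ M := le_trans (norm_nonneg _) hiM
  -- the sorted list of norms
  set l := ((N.val.map fun j => ‖lamc j‖).sort (· ≤ ·)) with hl
  have hlen : l.length = N.card := by
    simp [hl, Multiset.length_sort]
  have hm : N.card - 1 - b < l.length := by omega
  have hCget : C = l.get ⟨N.card - 1 - b, hm⟩ := by
    rw [hC, List.getD_eq_getElem (hn := hm), List.get_eq_getElem]
  have hsorted : l.Pairwise (· ≤ ·) := Multiset.pairwise_sort _ _
  -- C is one of the norms, hence nonnegative
  have hC0 : 0 ≤ C := by
    have hmem : C ∈ l := hCget ▸ l.get_mem _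
    have : C ∈ (N.val.map fun j => ‖lamc j‖) := by
      rwa [← Multiset.sort_eq (N.val.map fun j => ‖lamc j‖) (· ≤ ·), Multiset.mem_coe]
    obtain ⟨j, _, rfl⟩ := Multiset.mem_map.mp this
    exact norm_nonneg _
  -- at least b+1 elements of l are ≥ C
  have hdrop : ∀ x ∈ l.drop (N.card - 1 - b), C ≤ x := by
    intro x hx
    obtain ⟨k, hk⟩ := List.mem_iff_get.mp hx
    have hdl : (l.drop (N.card - 1 - b)).length = l.length - (N.card - 1 - b) :=
      List.length_drop
    have hlt : N.card - 1 - b + k.1 < l.length := by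
      have hk2 := k.2
      omega
    have : (l.drop (N.card - 1 - b)).get k = l.get ⟨N.card - 1 - b + k.1, hlt⟩ := by
      simp only [List.get_eq_getElem, List.getElem_drop]
    rw [← hk, this, hCget]
    exact hsorted.rel_get_of_le (by simp)
  have hcount : b + 1 ≤ l.countP (fun x => decide (C ≤ x)) := by
    have hsplit : l = l.take (N.card - 1 - b) ++ l.drop (N.card - 1 - b) :=
      (List.take_append_drop _ _).symm
    have h1 : (l.drop (N.card - 1 - b)).countP (fun x => decide (C ≤ x))
        = (l.drop (N.card - 1 - b)).length := by
      rw [List.countP_eq_length]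
      intro x hx
      exact decide_eq_true (hdrop x hx)
    calc b + 1 = (l.drop (N.card - 1 - b)).length := by
          rw [List.length_drop]; omega
      _ = (l.drop (N.card - 1 - b)).countP (fun x => decide (C ≤ x)) := h1.symm
      _ ≤ l.countP (fun x => decide (C ≤ x)) := by
          conv_rhs => rw [hsplit]
          rw [List.countP_append]; omega
  -- hence some j0 ∈ N \ B has C ≤ ‖lamc j0‖
  have hCM : C ≤ M := by
    have hcard : b + 1 ≤ (N.filter (fun j => C ≤ ‖lamc j‖)).card := by
      have : (N.filter (fun j => C ≤ ‖lamc j‖)).card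
          = Multiset.countP (fun x => C ≤ x) (N.val.map fun j => ‖lamc j‖) := by
        rw [Multiset.countP_map]
        rfl
      rw [this, ← Multiset.sort_eq (N.val.map fun j => ‖lamc j‖) (· ≤ ·),
        Multiset.coe_countP]
      exact hcount
    have hns : ¬ (N.filter (fun j => C ≤ ‖lamc j‖)) ⊆ B := by
      intro hsub
      have := Finset.card_le_card hsub
      omega
    obtain ⟨j0, hj0F, hj0B⟩ := Finset.not_subset.mp hns
    have hj0N : j0 ∈ N := Finset.mem_filter.mp hj0F |>.1
    have hj0C : C ≤ ‖lamc j0‖ := Finset.mem_filter.mp hj0F |>.2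
    exact le_trans hj0C (hle j0 (Finset.mem_insert_of_mem (Finset.mem_sdiff.mpr ⟨hj0N, hj0B⟩)))
  -- each clipped term is bounded
  have key : ∀ j ∈ U \ {i}, ‖e j • clip C (lamc j)‖ ≤ e j * M := by
    intro j hj
    have hjU : j ∈ U := (Finset.mem_sdiff.mp hj).1
    have hjni : j ≠ i := by
      simpa using (Finset.mem_sdiff.mp hj).2
    have hjN : j ∈ N := by
      rcases Finset.mem_insert.mp (hU hjU) with h | h
      · exact absurd h hjni
      · exact h
    have hclipM : ‖clip C (lamc j)‖ ≤ M := by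
      rw [norm_clip hC0]
      by_cases hjB : j ∈ B
      · exact le_trans (min_le_right _ _) hCM
      · exact le_trans (min_le_left _ _)
          (hle j (Finset.mem_insert_of_mem (Finset.mem_sdiff.mpr ⟨hjN, hjB⟩)))
    rw [norm_smul, Real.norm_eq_abs, abs_of_nonneg (he j hjU)]
    exact mul_le_mul_of_nonneg_left hclipM (he j hjU)
  -- final computation
  have hX : ‖e i • lamc i + ∑ j ∈ U \ {i}, e j • clip C (lamc j)‖ ≤ w * M := by
    calc ‖e i • lamc i + ∑ j ∈ U \ {i}, e j • clip C (lamc j)‖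
        ≤ ‖e i • lamc i‖ + ‖∑ j ∈ U \ {i}, e j • clip C (lamc j)‖ := norm_add_le _ _
      _ ≤ e i * M + ∑ j ∈ U \ {i}, ‖e j • clip C (lamc j)‖ := by
          gcongr
          · rw [norm_smul, Real.norm_eq_abs, abs_of_nonneg (he i hiU)]
            exact mul_le_mul_of_nonneg_left hiM (he i hiU)
          · exact norm_sum_le _ _
      _ ≤ e i * M + ∑ j ∈ U \ {i}, e j * M := by
          gcongr with j hj
          · exact key j hj
      _ = (∑ j ∈ U, e j) * M := by
          rw [Finset.sum_eq_add_sum_sdiff_singleton_of_mem hiU, add_mul, Finset.sum_mul]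
      _ = w * M := by rw [hw]
  rw [norm_smul, Real.norm_eq_abs, abs_of_nonneg (inv_nonneg.mpr hwpos.le)]
  calc w⁻¹ * ‖e i • lamc i + ∑ j ∈ U \ {i}, e j • clip C (lamc j)‖
      ≤ w⁻¹ * (w * M) := by
        exact mul_le_mul_of_nonneg_left hX (inv_nonneg.mpr hwpos.le)
    _ = M := by field_simp
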